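/- If the payoffs are normalized so that every player's payoff vector entries lie in [0,1], δ ∈ (0, 0.5], and ε ≤ δ/2, then for every player i and all profiles x, x', the correction term Λ_i^δ(x, x', ε) equals 0. In particular, with ε = δ/(δ+2), every pure strategy k outside Br_i^δ(x) satisfies (u_i^s((1−ε)x + εx'))_k ≤ max_{l ∈ Br_i^δ(x)} (u_i^s((1−ε)x + εx'))_l. -/

import Mathlib

open Finset
open scoped Classical

noncomputable section

/-- maximum of `v` over a finset `S` (junk value `0` if `S` is empty). -/
noncomputable def maxOnFin {α : Type*} (S : Finset α) (v : α → ℝ) : ℝ :=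
  if h : S.Nonempty then S.sup' h v else 0

/-- minimum of `v` over a finset `S` (junk value `0` if `S` is empty). -/
noncomputable def minOnFin {α : Type*} (S : Finset α) (v : α → ℝ) : ℝ :=
  if h : S.Nonempty then S.inf' h v else 0

section Polymatrix

variable {n : ℕ} (m : Fin n → ℕ) (N : Fin n → Finset (Fin n))
  (A : ∀ i j : Fin n, Matrix (Fin (m i)) (Fin (m j)) ℝ)

/-- vector of pure-strategy payoffs of player `i` against profile `x`:
`u_i^s(x) = Σ_{j ∈ N(i)} A_ij x_j`. -/
def usVec (i : Fin n) (x : ∀ j, Fin (m j) → ℝ) : Fin (m i) → ℝ :=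
  fun k => ∑ j ∈ N i, ∑ q, A i j k q * x j q

/-- payoff to player `i` from playing the (possibly formal) strategy `y`
against profile `x`: `u_i(y, x) = yᵀ u_i^s(x)`. -/
def payTo (i : Fin n) (y : Fin (m i) → ℝ) (x : ∀ j, Fin (m j) → ℝ) : ℝ :=
  ∑ k, y k * usVec m N A i x k

/-- payoff of player `i` under profile `x`. -/
def payoff (i : Fin n) (x : ∀ j, Fin (m j) → ℝ) : ℝ := payTo m N A i (x i) x

/-- best-response payoff of player `i` against `x`. -/
def brp (i : Fin n) (x : ∀ j, Fin (m j) → ℝ) : ℝ := maxOnFin univ (usVec m N A i x)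

/-- pure best responses of player `i` against `x`. -/
def brSet (i : Fin n) (x : ∀ j, Fin (m j) → ℝ) : Finset (Fin (m i)) :=
  univ.filter fun k => ∀ l, usVec m N A i x l ≤ usVec m N A i x k

/-- `δ`-best responses of player `i` against `x`. -/
def brdSet (δ : ℝ) (i : Fin n) (x : ∀ j, Fin (m j) → ℝ) : Finset (Fin (m i)) :=
  univ.filter fun k => brp m N A i x - δ ≤ usVec m N A i x k

/-- regret of player `i` under `x`: `f_i(x)`. -/
def regret (i : Fin n) (x : ∀ j, Fin (m j) → ℝ) : ℝ :=
  brp m N A i x - payoff m N A i x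

/-- maximum regret `f(x) = max_i f_i(x)`. -/
def maxRegret (x : ∀ j, Fin (m j) → ℝ) : ℝ := maxOnFin univ fun i => regret m N A i x

/-- set of players with maximum regret `K(x)`. -/
def Kset (x : ∀ j, Fin (m j) → ℝ) : Finset (Fin n) :=
  univ.filter fun i => regret m N A i x = maxRegret m N A x

/-- `Df_i^δ(x, x')`. -/
def Dfd (δ : ℝ) (i : Fin n) (x x' : ∀ j, Fin (m j) → ℝ) : ℝ :=
  maxOnFin (brdSet m N A δ i x) (usVec m N A i x')
    - payTo m N A i (x i) x' - payTo m N A i (x' i) x + payTo m N A i (x i) x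

/-- `Df^δ(x, x') = max_{i ∈ K(x)} Df_i^δ(x, x') - f(x)`. -/
def DfdAll (δ : ℝ) (x x' : ∀ j, Fin (m j) → ℝ) : ℝ :=
  maxOnFin (Kset m N A x) (fun i => Dfd m N A δ i x x') - maxRegret m N A x

/-- `Df_i(x, x')` (with exact best responses). -/
def Dfbr (i : Fin n) (x x' : ∀ j, Fin (m j) → ℝ) : ℝ :=
  maxOnFin (brSet m N A i x) (usVec m N A i x')
    - payTo m N A i (x i) x' - payTo m N A i (x' i) x + payTo m N A i (x i) x

/-- the profile `(1-ε)x + εx'`. -/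
def mix (x x' : ∀ j, Fin (m j) → ℝ) (ε : ℝ) : ∀ j, Fin (m j) → ℝ :=
  fun j => (1 - ε) • x j + ε • x' j

/-- `Λ_i^δ(x, x', ε)`; if the complement of the `δ`-best-response set is empty
the inner maximum is `-∞`, i.e. `Λ_i^δ = 0`. -/
def Lamd (δ : ℝ) (i : Fin n) (x x' : ∀ j, Fin (m j) → ℝ) (ε : ℝ) : ℝ :=
  if _h : ((brdSet m N A δ i x)ᶜ).Nonempty then
    max 0 (maxOnFin (brdSet m N A δ i x)ᶜ (usVec m N A i (mix m x x' ε))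
         - maxOnFin (brdSet m N A δ i x) (usVec m N A i (mix m x x' ε)))
  else 0

/-- `Λ_i(x, x', ε)` (with exact best responses). -/
def LamBr (i : Fin n) (x x' : ∀ j, Fin (m j) → ℝ) (ε : ℝ) : ℝ :=
  if _h : ((brSet m N A i x)ᶜ).Nonempty then
    max 0 (maxOnFin (brSet m N A i x)ᶜ (usVec m N A i (mix m x x' ε))
         - maxOnFin (brSet m N A i x) (usVec m N A i (mix m x x' ε)))
  else 0

/-- `x` is a mixed strategy profile. -/
def isProfile (x : ∀ j, Fin (m j) → ℝ) : Prop :=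
  ∀ j, x j ∈ stdSimplex ℝ (Fin (m j))

/-- the game is normalized: all pure-strategy payoffs of every player lie in
`[0,1]` against every mixed profile. -/
def normalized : Prop :=
  ∀ i (x : ∀ j, Fin (m j) → ℝ), isProfile m x →
    ∀ k, usVec m N A i x k ∈ Set.Icc (0:ℝ) 1


lemma usVec_mix (i : Fin n) (x x' : ∀ j, Fin (m j) → ℝ) (ε : ℝ) (k : Fin (m i)) :
    usVec m N A i (mix m x x' ε) k
      = (1 - ε) * usVec m N A i x k + ε * usVec m N A i x' k := by
  unfold usVec mix
  rw [Finset.mul_sum, Finset.mul_sum, ← Finset.sum_add_distrib]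
  refine Finset.sum_congr rfl fun j _ => ?_
  rw [Finset.mul_sum, Finset.mul_sum, ← Finset.sum_add_distrib]
  refine Finset.sum_congr rfl fun q _ => ?_
  simp only [Pi.add_apply, Pi.smul_apply, smul_eq_mul]
  ring

lemma core_bound (hm : ∀ i, 0 < m i) (hnorm : normalized m N A)
    (δ : ℝ) (hδ : 0 < δ) (hδ' : δ ≤ 0.5)
    (x x' : ∀ j, Fin (m j) → ℝ) (hx : isProfile m x) (hx' : isProfile m x')
    (ε : ℝ) (hε0 : 0 ≤ ε) (hε1 : ε ≤ δ / 2) (i : Fin n)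
    (k : Fin (m i)) (hk : k ∉ brdSet m N A δ i x) :
    usVec m N A i (mix m x x' ε) k
      ≤ maxOnFin (brdSet m N A δ i x) (usVec m N A i (mix m x x' ε)) := by
  have hFin : Nonempty (Fin (m i)) := ⟨⟨0, hm i⟩⟩
  have hne : (univ : Finset (Fin (m i))).Nonempty := univ_nonempty
  obtain ⟨l, -, hl⟩ := Finset.exists_mem_eq_sup' hne (usVec m N A i x)
  have hbrp : brp m N A i x = usVec m N A i x l := by
    simp [brp, maxOnFin, hne, hl]
  have hlmem : l ∈ brdSet m N A δ i x := by
    simp only [brdSet, mem_filter, mem_univ, true_and, hbrp]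
    linarith
  have hkbad : usVec m N A i x k < brp m N A i x - δ := by
    by_contra h
    exact hk (by simp only [brdSet, mem_filter, mem_univ, true_and]; linarith)
  have hbrdne : (brdSet m N A δ i x).Nonempty := ⟨l, hlmem⟩
  have hmax : usVec m N A i (mix m x x' ε) l
      ≤ maxOnFin (brdSet m N A δ i x) (usVec m N A i (mix m x x' ε)) := by
    simp only [maxOnFin, hbrdne, dif_pos]
    exact Finset.le_sup' _ hlmem
  have h1 := (hnorm i x hx k)
  have h2 := (hnorm i x' hx' k)
  have h3 := (hnorm i x' hx' l)
  simp only [Set.mem_Icc] at h1 h2 h3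
  rw [usVec_mix] at hmax ⊢
  have hεδ : ε * (1 + δ) ≤ δ := by nlinarith
  have hε1' : ε ≤ 1 := by nlinarith
  nlinarith [hmax, hbrp, hkbad, h1.1, h1.2, h2.1, h2.2, h3.1, h3.2]

/-- in a normalized polymatrix game, for `δ ∈ (0, 0.5]` and
`0 ≤ ε ≤ δ/2`, the correction term `Λ_i^δ(x, x', ε)` vanishes; in particular,
with `ε = δ/(δ+2)`, every pure strategy outside `Br_i^δ(x)` has payoff at the
mixed profile bounded by the maximum over `Br_i^δ(x)`. -/
theorem stmt6 (hn : 0 < n) (hm : ∀ i, 0 < m i) (hnorm : normalized m N A)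
    (δ : ℝ) (hδ : 0 < δ) (hδ' : δ ≤ 0.5)
    (x x' : ∀ j, Fin (m j) → ℝ) (hx : isProfile m x) (hx' : isProfile m x') :
    (∀ ε : ℝ, 0 ≤ ε → ε ≤ δ / 2 → ∀ i, Lamd m N A δ i x x' ε = 0) ∧
    (∀ i, ∀ k ∉ brdSet m N A δ i x,
      usVec m N A i (mix m x x' (δ / (δ + 2))) k
        ≤ maxOnFin (brdSet m N A δ i x)
            (usVec m N A i (mix m x x' (δ / (δ + 2))))) := by
  have hcore := core_bound m N A hm hnorm δ hδ hδ' x x' hx hx'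
  constructor
  · intro ε hε0 hε1 i
    unfold Lamd
    split_ifs with h
    · rw [max_eq_left]
      have : maxOnFin (brdSet m N A δ i x)ᶜ (usVec m N A i (mix m x x' ε))
          ≤ maxOnFin (brdSet m N A δ i x) (usVec m N A i (mix m x x' ε)) := by
        rw [maxOnFin, dif_pos h]
        apply Finset.sup'_le
        intro k hk
        exact hcore ε hε0 hε1 i k (by simpa using hk)
      linarith
    · rfl
  · intro i k hk
    have hε0 : (0:ℝ) ≤ δ / (δ + 2) := by positivity
    have hε1 : δ / (δ + 2) ≤ δ / 2 := by
      apply div_le_div_of_nonneg_left hδ.le (by norm_num) (by linarith)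
    exact hcore _ hε0 hε1 i k hk

end Polymatrix
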